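/- For every x ∈ L with ⟨x, o₁⟩ = 0 and ⟨x, o₂⟩ = 0, one has Ω(x) = a(x); that is, on the orthogonal complement of the span of o₁ and o₂ the linear part of the spectral involution coincides with the action of the involution α_B on H²(B,ℤ). -/

import Mathlib

/-! Statement 8: on the orthogonal complement of `o₁, o₂` the linear part `Ω` of the
spectral involution coincides with the action `a = α_B^*` on `H²(B,ℤ)`. -/

noncomputable section

def el : Fin 10 → ℤ := Pi.single 0 1
def e1 : Fin 10 → ℤ := Pi.single 1 1
def e2 : Fin 10 → ℤ := Pi.single 2 1
def e3 : Fin 10 → ℤ := Pi.single 3 1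
def e4 : Fin 10 → ℤ := Pi.single 4 1
def e5 : Fin 10 → ℤ := Pi.single 5 1
def e6 : Fin 10 → ℤ := Pi.single 6 1
def e7 : Fin 10 → ℤ := Pi.single 7 1
def e8 : Fin 10 → ℤ := Pi.single 8 1
def e9 : Fin 10 → ℤ := Pi.single 9 1

/-- The intersection form: `⟨ℓ,ℓ⟩ = 1`, `⟨eᵢ,eⱼ⟩ = -δᵢⱼ`, `⟨ℓ,eᵢ⟩ = 0`. -/
def form (x y : Fin 10 → ℤ) : ℤ := 2 * x 0 * y 0 - ∑ i, x i * y i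

def ff : Fin 10 → ℤ := (3 : ℤ) • el - (e1 + e2 + e3 + e4 + e5 + e6 + e7 + e8 + e9)
def n1 : Fin 10 → ℤ := e8 - e9
def o1 : Fin 10 → ℤ := ff - e8 + e9
def n2 : Fin 10 → ℤ := el - e7 - e8 - e9
def o2 : Fin 10 → ℤ := (2 : ℤ) • el - (e1 + e2 + e3 + e4 + e5 + e6)

def Omega (tau : (Fin 10 → ℤ) →ₗ[ℤ] (Fin 10 → ℤ)) (x : Fin 10 → ℤ) : Fin 10 → ℤ :=
  tau x + form x (e9 - e1) • ff + form x ff • (e9 - e1 + ff)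

lemma sum10 (g : Fin 10 → ℤ) :
    ∑ i, g i = g 0 + g 1 + g 2 + g 3 + g 4 + g 5 + g 6 + g 7 + g 8 + g 9 := by
  simp [Fin.sum_univ_succ, add_assoc]

set_option maxHeartbeats 1600000 in
theorem stmt8 (tau a : (Fin 10 → ℤ) →ₗ[ℤ] (Fin 10 → ℤ))
    (htl : tau el = (2 : ℤ) • ff + (2 : ℤ) • (e1 + e9) - (e2 + e3) + e7)
    (ht1 : tau e1 = e9)
    (ht2 : tau e2 = ff - e2 + e1 + e9)
    (ht3 : tau e3 = ff - e3 + e1 + e9)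
    (ht4 : tau e4 = ff - el + e4 + e1 + e7 + e9)
    (ht5 : tau e5 = ff - el + e5 + e1 + e7 + e9)
    (ht6 : tau e6 = ff - el + e6 + e1 + e7 + e9)
    (ht7 : tau e7 = el - e2 - e3)
    (ht8 : tau e8 = ff - el + e1 + e7 + e8 + e9)
    (ht9 : tau e9 = e1)
    (hal : a el = (3 : ℤ) • el - (e1 + e2 + e3 + (2 : ℤ) • e7 + e8))
    (ha1 : a e1 = el - e1 - e7) (ha2 : a e2 = el - e2 - e7) (ha3 : a e3 = el - e3 - e7)
    (ha4 : a e4 = e4) (ha5 : a e5 = e5) (ha6 : a e6 = e6)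
    (ha7 : a e7 = (2 : ℤ) • el - (e1 + e2 + e3 + e7 + e8))
    (ha8 : a e8 = el - e7 - e8) (ha9 : a e9 = e9)
    :
    ∀ x : Fin 10 → ℤ, form x o1 = 0 → form x o2 = 0 → Omega tau x = a x := by
  intro x h1 h2
  have hx : x = x 0 • el + x 1 • e1 + x 2 • e2 + x 3 • e3 + x 4 • e4 + x 5 • e5
      + x 6 • e6 + x 7 • e7 + x 8 • e8 + x 9 • e9 := by
    funext i
    fin_cases i <;>
      simp [el, e1, e2, e3, e4, e5, e6, e7, e8, e9, Pi.single_apply]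
  have hA : form x (e9 - e1) = x 1 - x 9 := by
    simp [form, e1, e9, sum10, Pi.single_apply]
    ring
  have hB : form x ff = 3 * x 0 + x 1 + x 2 + x 3 + x 4 + x 5 + x 6 + x 7 + x 8 + x 9 := by
    simp [form, ff, el, e1, e2, e3, e4, e5, e6, e7, e8, e9, sum10, Pi.single_apply]
    ring
  have h1' : 3 * x 0 + x 1 + x 2 + x 3 + x 4 + x 5 + x 6 + x 7 + 2 * x 8 = 0 := by
    simp [form, o1, ff, el, e1, e2, e3, e4, e5, e6, e7, e8, e9,
      sum10, Pi.single_apply] at h1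
    linarith
  have h2' : 2 * x 0 + x 1 + x 2 + x 3 + x 4 + x 5 + x 6 = 0 := by
    simp [form, o2, el, e1, e2, e3, e4, e5, e6, sum10, Pi.single_apply] at h2
    linarith
  rw [Omega, hA, hB]
  rw [show tau x = tau (x 0 • el + x 1 • e1 + x 2 • e2 + x 3 • e3 + x 4 • e4 + x 5 • e5
      + x 6 • e6 + x 7 • e7 + x 8 • e8 + x 9 • e9) from by rw [← hx],
    show a x = a (x 0 • el + x 1 • e1 + x 2 • e2 + x 3 • e3 + x 4 • e4 + x 5 • e5
      + x 6 • e6 + x 7 • e7 + x 8 • e8 + x 9 • e9) from by rw [← hx]]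
  simp only [map_add, map_smul, htl, ht1, ht2, ht3, ht4, ht5, ht6, ht7, ht8, ht9,
    hal, ha1, ha2, ha3, ha4, ha5, ha6, ha7, ha8, ha9]
  funext i
  fin_cases i <;>
    simp (config := { decide := true }) only [ff, el, e1, e2, e3, e4, e5, e6, e7, e8, e9,
      Pi.add_apply, Pi.sub_apply, Pi.smul_apply, smul_eq_mul, Pi.single_apply,
      if_true, if_false] <;>
    linarith
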